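/- If x, x' ∈ [0,1) satisfy |D_j(x)| = |D_j(x')| for every j ≥ 1, then T(x) = T(x'). -/

import Mathlib

open Set

/-- `phi x` is the distance from `x` to the nearest integer. -/
noncomputable def phi (x : ℝ) : ℝ := min (Int.fract x) (1 - Int.fract x)

/-- The Takagi function. -/
noncomputable def T (x : ℝ) : ℝ := ∑' n : ℕ, (1/2 : ℝ)^n * phi (2^n * x)

/-- The `j`-th binary digit of `x ∈ [0,1)` (terminating expansion for dyadics). -/
noncomputable def eps (x : ℝ) (j : ℕ) : ℤ := ⌊2^j * x⌋ % 2

/-- `D k x = ∑_{j=1}^k (-1)^{ε_j(x)}`. -/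
noncomputable def D (k : ℕ) (x : ℝ) : ℤ :=
  ∑ j ∈ Finset.Icc 1 k, (-1 : ℤ)^((eps x j).toNat)

/-- `x₀` is a balanced dyadic rational of order `m`. -/
def BalancedDyadic (m : ℕ) (x₀ : ℝ) : Prop :=
  x₀ ∈ Set.Ico (0:ℝ) 1 ∧ (∃ k : ℕ, x₀ = (k : ℝ) / 4^m) ∧ D (2*m) x₀ = 0

/-- The generation of a balanced dyadic rational of order `m`. -/
noncomputable def generation (m : ℕ) (x₀ : ℝ) : ℕ :=
  ((Finset.Icc 1 (2*m)).filter (fun j => D j x₀ = 0)).card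

/-- The local level set of `x`. -/
def LocalLevelSet (x : ℝ) : Set ℝ :=
  {x' ∈ Set.Ico (0:ℝ) 1 | ∀ j : ℕ, |D j x'| = |D j x|}

/-- The level set of `T` at level `y`. -/
def L (y : ℝ) : Set ℝ := {x ∈ Set.Icc (0:ℝ) 1 | T x = y}

/-! ### Auxiliary development -/

lemma eps01 (x : ℝ) (j : ℕ) : eps x j = 0 ∨ eps x j = 1 := by
  unfold eps; omega

lemma eps_nonneg (x : ℝ) (j : ℕ) : (0:ℝ) ≤ (eps x j : ℝ) := by
  rcases eps01 x j with h | h <;> simp [h]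

lemma eps_le_one (x : ℝ) (j : ℕ) : (eps x j : ℝ) ≤ 1 := by
  rcases eps01 x j with h | h <;> simp [h]

lemma floor_two_mul_aux (a : ℝ) : ⌊2*a⌋ = 2*⌊a⌋ ∨ ⌊2*a⌋ = 2*⌊a⌋+1 := by
  have h1 : (⌊a⌋:ℝ) ≤ a := Int.floor_le a
  have h2 : a < ⌊a⌋ + 1 := Int.lt_floor_add_one a
  have h3 : (2*⌊a⌋ : ℤ) ≤ ⌊2*a⌋ := by
    apply Int.le_floor.2; push_cast; linarith
  have h4 : ⌊2*a⌋ < 2*⌊a⌋+2 := by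
    apply Int.floor_lt.2; push_cast; linarith
  omega

lemma floor_succ (y : ℝ) (k : ℕ) : ⌊2^(k+1) * y⌋ = 2 * ⌊2^k * y⌋ + eps y (k+1) := by
  have h : (2:ℝ)^(k+1) * y = 2 * (2^k * y) := by ring
  have h2 := floor_two_mul_aux (2^k*y)
  unfold eps
  rw [h]
  omega

lemma sum_eps_range (y : ℝ) (hy0 : 0 ≤ y) (hy1 : y < 1) (k : ℕ) :
    ∑ j ∈ Finset.range k, (eps y (j+1) : ℝ)/2^(j+1) = (⌊2^k * y⌋ : ℝ)/2^k := by
  induction k with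
  | zero =>
    simp [(Int.floor_eq_zero_iff.2 ⟨hy0, hy1⟩ : ⌊y⌋ = 0)]
  | succ k ih =>
    rw [Finset.sum_range_succ, ih, floor_succ]
    have h2 : (2:ℝ)^k ≠ 0 := by positivity
    have h3 : (2:ℝ)^(k+1) ≠ 0 := by positivity
    push_cast
    field_simp
    ring

lemma summable_eps (y : ℝ) : Summable (fun j : ℕ => (eps y (j+1) : ℝ)/2^(j+1)) := by
  apply Summable.of_nonneg_of_le
    (fun j => div_nonneg (eps_nonneg y (j+1)) (by positivity)) (fun j => ?_) summable_geometric_two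
  have h1 : (eps y (j+1):ℝ) ≤ 1 := eps_le_one y (j+1)
  calc (eps y (j+1):ℝ)/2^(j+1) ≤ 1/2^(j+1) := by gcongr
    _ ≤ 1/2^j := by gcongr <;> norm_num
    _ = (1/2)^j := by rw [one_div_pow]

lemma hasSum_eps (y : ℝ) (hy0 : 0 ≤ y) (hy1 : y < 1) :
    HasSum (fun j : ℕ => (eps y (j+1):ℝ)/2^(j+1)) y := by
  rw [(summable_eps y).hasSum_iff_tendsto_nat]
  have hlow : ∀ k : ℕ, y - (1/2:ℝ)^k ≤ ∑ j ∈ Finset.range k, (eps y (j+1):ℝ)/2^(j+1) := by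
    intro k
    rw [sum_eps_range y hy0 hy1 k]
    have h2 : (0:ℝ) < 2^k := by positivity
    rw [le_div_iff₀ h2]
    have h1 : (2:ℝ)^k * y < ⌊2^k*y⌋ + 1 := Int.lt_floor_add_one _
    have h3 : (1/2:ℝ)^k * 2^k = 1 := by
      rw [one_div_pow]; field_simp
    nlinarith [h1, h3]
  have hupp : ∀ k : ℕ, ∑ j ∈ Finset.range k, (eps y (j+1):ℝ)/2^(j+1) ≤ y := by
    intro k
    rw [sum_eps_range y hy0 hy1 k]
    have h2 : (0:ℝ) < 2^k := by positivity
    rw [div_le_iff₀ h2]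
    have h1 : ((⌊2^k*y⌋ : ℝ)) ≤ 2^k * y := Int.floor_le _
    linarith [h1]
  apply tendsto_of_tendsto_of_tendsto_of_le_of_le (g := fun k : ℕ => y - (1/2:ℝ)^k)
    (h := fun _ : ℕ => y) ?_ tendsto_const_nhds hlow hupp
  have := tendsto_pow_atTop_nhds_zero_of_lt_one (r := (1/2:ℝ)) (by norm_num) (by norm_num)
  simpa using tendsto_const_nhds.sub this

lemma eps_one_lt (y : ℝ) (hy0 : 0 ≤ y) (h : y < 1/2) : eps y 1 = 0 := by
  unfold eps
  have : ⌊(2:ℝ)^1 * y⌋ = 0 := by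
    apply Int.floor_eq_zero_iff.2
    constructor
    · positivity
    · norm_num; linarith
  rw [this]; rfl

lemma eps_one_ge (y : ℝ) (h : 1/2 ≤ y) (hy1 : y < 1) : eps y 1 = 1 := by
  unfold eps
  have : ⌊(2:ℝ)^1 * y⌋ = 1 := by
    apply Int.floor_eq_iff.2
    constructor <;> push_cast <;> norm_num <;> linarith
  rw [this]; rfl

lemma hasSum_phi (y : ℝ) (hy0 : 0 ≤ y) (hy1 : y < 1) :
    HasSum (fun j : ℕ => (if eps y (j+2) = eps y 1 then (0:ℝ) else 1)/2^(j+2)) (phi y) := by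
  have htail : HasSum (fun j : ℕ => (eps y (j+2):ℝ)/2^(j+2)) (y - (eps y 1:ℝ)/2^1) := by
    have h2 : HasSum (fun j : ℕ => (eps y (j+1+1):ℝ)/2^(j+1+1)) (y - (eps y 1:ℝ)/2^1) := by
      apply (hasSum_nat_add_iff (f := fun j : ℕ => (eps y (j+1):ℝ)/2^(j+1)) 1).2
      have h3 : y - (eps y 1:ℝ)/2^1 + ∑ i ∈ Finset.range 1, (eps y (i+1):ℝ)/2^(i+1) = y := by
        simp
      rw [h3]
      exact hasSum_eps y hy0 hy1
    have : (fun j : ℕ => (eps y (j+1+1):ℝ)/2^(j+1+1)) = fun j : ℕ => (eps y (j+2):ℝ)/2^(j+2) := by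
      funext j; norm_num
    rwa [this] at h2
  have hfract : Int.fract y = y := Int.fract_eq_self.2 ⟨hy0, hy1⟩
  rcases lt_or_ge y (1/2) with hc | hc
  · have e1 : eps y 1 = 0 := eps_one_lt y hy0 hc
    have hphi : phi y = y := by
      unfold phi; rw [hfract, min_eq_left (by linarith)]
    have hfun : (fun j : ℕ => (if eps y (j+2) = eps y 1 then (0:ℝ) else 1)/2^(j+2))
        = fun j : ℕ => (eps y (j+2):ℝ)/2^(j+2) := by
      funext j
      rcases eps01 y (j+2) with h | h <;> simp [h, e1]
    rw [hphi, hfun]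
    simpa [e1] using htail
  · have e1 : eps y 1 = 1 := eps_one_ge y hc hy1
    have hphi : phi y = 1 - y := by
      unfold phi; rw [hfract, min_eq_right (by linarith)]
    have hgeo : HasSum (fun j : ℕ => (1:ℝ)/2^(j+2)) (1/2) := by
      have := hasSum_geometric_two.mul_left (1/4 : ℝ)
      have hf : (fun j : ℕ => (1/4:ℝ) * (1/2)^j) = fun j : ℕ => (1:ℝ)/2^(j+2) := by
        funext j
        rw [one_div_pow, pow_add]
        norm_num
      rw [hf] at this
      norm_num at this
      simpa [one_div] using this
    have hsub := hgeo.sub htail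
    have hfun : (fun j : ℕ => (if eps y (j+2) = eps y 1 then (0:ℝ) else 1)/2^(j+2))
        = fun j : ℕ => (1:ℝ)/2^(j+2) - (eps y (j+2):ℝ)/2^(j+2) := by
      funext j
      rcases eps01 y (j+2) with h | h <;> simp [h, e1] <;> ring_nf <;> simp
    rw [hphi, hfun]
    have hv : 1 - y = 1/2 - (y - (eps y 1:ℝ)/2^1) := by
      rw [e1]
      push_cast
      ring
    rw [hv]
    exact hsub

lemma eps_shift (x : ℝ) (n j : ℕ) (hj : 1 ≤ j) :
    eps (Int.fract (2^n * x)) j = eps x (n+j) := by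
  unfold eps
  have h1 : (2:ℝ)^j * Int.fract (2^n*x) = 2^(n+j)*x - ((2^j*⌊2^n*x⌋ : ℤ) : ℝ) := by
    rw [Int.fract]
    push_cast
    ring
  rw [h1, Int.floor_sub_intCast]
  obtain ⟨i, rfl⟩ := Nat.exists_eq_add_of_le hj
  have h2 : (2:ℤ)^(1+i) = 2*2^i := by ring
  rw [h2, mul_assoc]
  omega

lemma phi_fract (z : ℝ) : phi (Int.fract z) = phi z := by
  unfold phi; rw [Int.fract_fract]

lemma phi_nonneg (z : ℝ) : 0 ≤ phi z :=
  le_min (Int.fract_nonneg z) (by have := Int.fract_lt_one z; linarith)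

lemma phi_le_one (z : ℝ) : phi z ≤ 1 :=
  (min_le_left _ _).trans (le_of_lt (Int.fract_lt_one z))

/-- Auxiliary double-indexed family. -/
noncomputable def Fx (x : ℝ) (n m : ℕ) : ℝ :=
  if n+2 ≤ m then (if eps x m = eps x (n+1) then 0 else 1)/2^m else 0

lemma Fx_nonneg (x : ℝ) (n m : ℕ) : 0 ≤ Fx x n m := by
  unfold Fx
  split_ifs <;> positivity

lemma hasSum_Fx (x : ℝ) (hx0 : 0 ≤ x) (hx1 : x < 1) (n : ℕ) :
    HasSum (Fx x n) ((1/2:ℝ)^n * phi (2^n * x)) := by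
  set y := Int.fract (2^n * x) with hy
  have hy0 : 0 ≤ y := Int.fract_nonneg _
  have hy1 : y < 1 := Int.fract_lt_one _
  have h := (hasSum_phi y hy0 hy1).mul_left ((1/2:ℝ)^n)
  rw [hy, phi_fract] at h
  have hfun : (fun j : ℕ => (1/2:ℝ)^n * ((if eps y (j+2) = eps y 1 then (0:ℝ) else 1)/2^(j+2)))
      = fun j : ℕ => Fx x n (n+j+2) := by
    funext j
    have e2 : eps y (j+2) = eps x (n+(j+2)) := eps_shift x n (j+2) (by omega)
    have e1 : eps y 1 = eps x (n+1) := eps_shift x n 1 le_rfl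
    rw [e1, e2]
    have hnj : n+(j+2) = n+j+2 := by omega
    rw [hnj]
    simp only [Fx, if_pos (by omega : n+2 ≤ n+j+2)]
    rw [show n+j+2 = n+(j+2) from by omega, pow_add, one_div_pow]
    field_simp
    split_ifs <;> ring
  rw [hfun] at h
  have hinj : Function.Injective (fun j : ℕ => n+j+2) := by
    intro a b hab
    simp only at hab
    omega
  have hzero : ∀ m ∉ Set.range (fun j : ℕ => n+j+2), Fx x n m = 0 := by
    intro m hm
    simp only [Set.mem_range, not_exists] at hm
    have hle : ¬ (n+2 ≤ m) := by
      intro hle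
      exact hm (m - n - 2) (by omega)
    simp [Fx, hle]
  exact (hinj.hasSum_iff hzero).1 h

lemma summable_Fx (x : ℝ) (hx0 : 0 ≤ x) (hx1 : x < 1) :
    Summable (fun p : ℕ × ℕ => Fx x p.1 p.2) := by
  rw [summable_prod_of_nonneg (fun p => Fx_nonneg x p.1 p.2)]
  refine ⟨fun n => (hasSum_Fx x hx0 hx1 n).summable, ?_⟩
  have hfun : (fun n => ∑' m, Fx x n m) = fun n => (1/2:ℝ)^n * phi (2^n * x) := by
    funext n; exact (hasSum_Fx x hx0 hx1 n).tsum_eq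
  rw [hfun]
  apply Summable.of_nonneg_of_le
    (fun n => mul_nonneg (by positivity) (phi_nonneg _)) (fun n => ?_) summable_geometric_two
  calc (1/2:ℝ)^n * phi (2^n*x) ≤ (1/2)^n * 1 :=
        mul_le_mul_of_nonneg_left (phi_le_one _) (by positivity)
    _ = (1/2)^n := mul_one _

/-- The count of indices `i < m` with `ε_i ≠ ε_m`, as an integer. -/
noncomputable def cnt (x : ℝ) (m : ℕ) : ℤ :=
  ∑ i ∈ Finset.range (m-1), (if eps x m = eps x (i+1) then (0:ℤ) else 1)

lemma T_repr (x : ℝ) (hx0 : 0 ≤ x) (hx1 : x < 1) :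
    T x = ∑' m : ℕ, ((cnt x m : ℝ))/2^m := by
  have hsum : Summable (Function.uncurry (fun n m => Fx x n m)) := summable_Fx x hx0 hx1
  have h1 : T x = ∑' (n : ℕ) (m : ℕ), Fx x n m := by
    unfold T
    congr 1
    funext n
    exact ((hasSum_Fx x hx0 hx1 n).tsum_eq).symm
  rw [h1, ← hsum.tsum_comm]
  congr 1
  funext m
  have hvanish : ∀ n ∉ Finset.range (m-1), Fx x n m = 0 := by
    intro n hn
    rw [Finset.mem_range] at hn
    have : ¬ (n+2 ≤ m) := by omega
    simp [Fx, this]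
  rw [tsum_eq_sum hvanish]
  have hterm : ∀ n ∈ Finset.range (m-1),
      Fx x n m = (if eps x m = eps x (n+1) then (0:ℝ) else 1)/2^m := by
    intro n hn
    rw [Finset.mem_range] at hn
    simp [Fx, (by omega : n+2 ≤ m)]
  rw [Finset.sum_congr rfl hterm, ← Finset.sum_div]
  congr 1
  unfold cnt
  push_cast
  apply Finset.sum_congr rfl
  intro i _
  split_ifs <;> norm_num

lemma D_range (x : ℝ) (k : ℕ) : D k x = ∑ i ∈ Finset.range k, (-1:ℤ)^((eps x (i+1)).toNat) := by
  induction k with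
  | zero => simp [D]
  | succ k ih =>
    rw [Finset.sum_range_succ, ← ih]
    unfold D
    rw [Finset.sum_Icc_succ_top (by omega)]

lemma sq_s (x : ℝ) (j : ℕ) : ((-1:ℤ)^((eps x j).toNat))^2 = 1 := by
  rcases eps01 x j with h | h <;> norm_num [h]

lemma D_succ_pred (x : ℝ) (m : ℕ) (hm : 1 ≤ m) :
    D m x = D (m-1) x + (-1:ℤ)^((eps x m).toNat) := by
  have hm' : m - 1 + 1 = m := by omega
  have h : D (m-1+1) x = D (m-1) x + (-1:ℤ)^((eps x (m-1+1)).toNat) := by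
    unfold D
    rw [Finset.sum_Icc_succ_top (by omega)]
  rwa [hm'] at h

lemma four_mul_cnt (x : ℝ) (m : ℕ) (hm : 1 ≤ m) :
    4 * cnt x m = 2*(m:ℤ) - 1 - (D m x)^2 + (D (m-1) x)^2 := by
  set s : ℤ := (-1:ℤ)^((eps x m).toNat) with hs
  have key : ∀ i : ℕ, 2 * (if eps x m = eps x (i+1) then (0:ℤ) else 1)
      = 1 - s * (-1:ℤ)^((eps x (i+1)).toNat) := by
    intro i
    rw [hs]
    rcases eps01 x m with h1 | h1 <;> rcases eps01 x (i+1) with h2 | h2 <;>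
      simp [h1, h2]
  have hsum : 2 * cnt x m = ((m:ℤ) - 1) - s * D (m-1) x := by
    unfold cnt
    rw [Finset.mul_sum, Finset.sum_congr rfl (fun i _ => key i), Finset.sum_sub_distrib,
      Finset.sum_const, ← Finset.mul_sum, ← D_range]
    simp only [Finset.card_range, nsmul_eq_mul, mul_one]
    congr 1
    omega
  have hD := D_succ_pred x m hm
  rw [← hs] at hD
  have hsq : s^2 = 1 := sq_s x m
  linear_combination (2:ℤ)*hsum + (D m x + D (m-1) x + s)*hD + hsq

lemma cnt_eq (x x' : ℝ) (h : ∀ j : ℕ, 1 ≤ j → |D j x| = |D j x'|) (m : ℕ) :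
    cnt x m = cnt x' m := by
  rcases Nat.eq_zero_or_pos m with rfl | hm
  · simp [cnt]
  have hsq : ∀ j, 1 ≤ j → (D j x)^2 = (D j x')^2 := fun j hj => by
    rw [← sq_abs, h j hj, sq_abs]
  have h1 : (D m x)^2 = (D m x')^2 := hsq m hm
  have h2 : (D (m-1) x)^2 = (D (m-1) x')^2 := by
    rcases Nat.eq_zero_or_pos (m-1) with he | hp
    · rw [he]; simp [D]
    · exact hsq _ hp
  have e1 := four_mul_cnt x m hm
  have e2 := four_mul_cnt x' m hm
  linarith [e1, e2, h1, h2]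

theorem takagi_equivalence_implies_equal (x x' : ℝ)
    (hx : x ∈ Set.Ico (0:ℝ) 1) (hx' : x' ∈ Set.Ico (0:ℝ) 1)
    (h : ∀ j : ℕ, 1 ≤ j → |D j x| = |D j x'|) :
    T x = T x' := by
  obtain ⟨hx0, hx1⟩ := hx
  obtain ⟨hx0', hx1'⟩ := hx'
  rw [T_repr x hx0 hx1, T_repr x' hx0' hx1']
  congr 1
  funext m
  rw [cnt_eq x x' h m]
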